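/- Weighted sums of dilated symbols: Let A be an automorphism of G with adjoint A*, let m ∈ BM_θ[(p₁'; (p₂'; (p₃'], and let 1/q = 1/p₁' + 1/p₂' − 1/p₃'. If Ψ : Ĝ → ℂ satisfies Σ_{u∈Ĝ} |A*|^{−1/q} |Ψ(u)| < ∞ (i.e., Ψ ∈ ℓ¹(Ĝ, |A*|^{−1/q} dμ)), then m_Ψ(s,t) = Σ_{u ∈ A*Ĝ} m(A*s, A*t) Ψ(u) belongs to BM_θ[(p₁'; (p₂'; (p₃'], and ‖m_Ψ‖_{[(p₁';(p₂';(p₃']_θ} ≤ ‖Ψ‖_{ℓ¹(Ĝ, |A*|^{−1/q} dμ)} ‖m‖_{[(p₁';(p₂';(p₃']_θ}. -/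

import Mathlib

/- Setting: `G` is a compact abelian metric group with a finite Haar measure `μ`;
its dual group `Γ = Ĝ` is a countable discrete abelian group, paired with `G`
via the family of characters `χ : Γ → G → ℂ`, `χ s x = ⟨s, x⟩`. -/

open MeasureTheory ENNReal Filter

noncomputable section

variable {G : Type*} [MetricSpace G] [AddCommGroup G] [IsTopologicalAddGroup G]
  [CompactSpace G] [MeasurableSpace G] [BorelSpace G]
variable {Γ : Type*} [AddCommGroup Γ] [Countable Γ]

/-- The conjugate exponent `r' = r / (r - 1)`. -/
def conjExp (r : ℝ) : ℝ := r / (r - 1)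

/-- `χ` is a (separately multiplicative, unimodular, continuous) family of characters
pairing the dual group `Γ` with `G`. -/
def IsCharFamily (χ : Γ → G → ℂ) : Prop :=
  (∀ s t x, χ (s + t) x = χ s x * χ t x) ∧
  (∀ (s : Γ) (x y : G), χ s (x + y) = χ s x * χ s y) ∧
  (∀ (s : Γ) (x : G), ‖χ s x‖ = 1) ∧
  (∀ s : Γ, Continuous (χ s))

/-- One piece of the small Lebesgue norm:
`inf_{0<ε<p-1} ε^{-θ/(p-ε)} ‖h‖_{(p-ε)'}`. -/
def pieceNorm (μ : Measure G) (p θ : ℝ) (h : G → ℂ) : ℝ≥0∞ :=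
  ⨅ ε : {ε : ℝ // 0 < ε ∧ ε < p - 1},
    ENNReal.ofReal ((ε.1) ^ (-(θ / (p - ε.1)))) *
      (∫⁻ x, (‖h x‖₊ : ℝ≥0∞) ^ conjExp (p - ε.1) ∂μ) ^ (1 / conjExp (p - ε.1))

/-- The small Lebesgue norm `‖g‖_{(p',θ}`: infimum over all decompositions
`g = Σ_k g_k` of `Σ_k inf_{0<ε<p-1} ε^{-θ/(p-ε)} ‖g_k‖_{(p-ε)'}`. -/
def smallNorm (μ : Measure G) (p θ : ℝ) (g : G → ℂ) : ℝ≥0∞ :=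
  ⨅ gk : {gk : ℕ → G → ℂ // ∀ x, HasSum (fun k => gk k x) (g x)},
    ∑' k : ℕ, pieceNorm μ p θ (gk.1 k)

/-- `g` belongs to the small Lebesgue space `L^{(p',θ}(G)`. -/
def MemSmall (μ : Measure G) (p θ : ℝ) (g : G → ℂ) : Prop :=
  Measurable g ∧ smallNorm μ p θ g < ⊤

/-- The grand Lebesgue norm `‖f‖_{p),θ} = sup_{0<ε≤p-1} ε^{θ/(p-ε)} ‖f‖_{p-ε}`. -/
def grandNorm (μ : Measure G) (p θ : ℝ) (f : G → ℂ) : ℝ≥0∞ :=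
  ⨆ ε : {ε : ℝ // 0 < ε ∧ ε ≤ p - 1},
    ENNReal.ofReal ((ε.1) ^ (θ / (p - ε.1))) *
      (∫⁻ x, (‖f x‖₊ : ℝ≥0∞) ^ (p - ε.1) ∂μ) ^ (1 / (p - ε.1))

/-- The Fourier transform `f̂(γ) = ∫_G f(x) ⟨γ, -x⟩ dμ(x)`. -/
def fourierT (μ : Measure G) (χ : Γ → G → ℂ) (f : G → ℂ) (γ : Γ) : ℂ :=
  ∫ x, f x * χ γ (-x) ∂μ

/-- The bilinear operator `B_m(f,g)(x) = Σ_s Σ_t f̂(s) ĝ(t) m(s,t) ⟨s+t, x⟩`. -/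
def Bop (μ : Measure G) (χ : Γ → G → ℂ) (m : Γ → Γ → ℂ) (f g : G → ℂ) (x : G) : ℂ :=
  ∑' s : Γ, ∑' t : Γ, fourierT μ χ f s * fourierT μ χ g t * m s t * χ (s + t) x

/-- `m ∈ BM_θ[(p₁'; (p₂'; (p₃']`: there is `C > 0` with
`‖B_m(f,g)‖_{(p₃',θ} ≤ C ‖f‖_{(p₁',θ} ‖g‖_{(p₂',θ}` for all smooth `f, g`. -/
def BMclass (μ : Measure G) (χ : Γ → G → ℂ) (p₁ p₂ p₃ θ : ℝ) (m : Γ → Γ → ℂ) : Prop :=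
  ∃ C : ℝ, 0 < C ∧ ∀ f g : G → ℂ, Continuous f → Continuous g →
    smallNorm μ p₃ θ (Bop μ χ m f g) ≤
      ENNReal.ofReal C * (smallNorm μ p₁ θ f * smallNorm μ p₂ θ g)

/-- The bilinear multiplier norm `‖m‖_{[(p₁';(p₂';(p₃']_θ} = ‖B_m‖`. -/
def BMnorm (μ : Measure G) (χ : Γ → G → ℂ) (p₁ p₂ p₃ θ : ℝ) (m : Γ → Γ → ℂ) : ℝ≥0∞ :=
  ⨆ (f : G → ℂ) (g : G → ℂ) (_ : Continuous f) (_ : Continuous g)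
    (_ : smallNorm μ p₁ θ f ≤ 1) (_ : smallNorm μ p₂ θ g ≤ 1),
    smallNorm μ p₃ θ (Bop μ χ m f g)

set_option linter.unusedSectionVars false in
private lemma pieceNorm_comp (μ : Measure G) (p θ : ℝ) (h : G → ℂ) (e : G → G)
    (h1 : MeasurePreserving e μ μ) (h2 : MeasurableEmbedding e) :
    pieceNorm μ p θ (fun x => h (e x)) = pieceNorm μ p θ h := by
  unfold pieceNorm
  refine iInf_congr fun ε => ?_
  congr 1
  congr 1
  exact h1.lintegral_comp_emb h2 (fun y => (‖h y‖₊ : ℝ≥0∞) ^ conjExp (p - ε.1))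

set_option linter.unusedSectionVars false in
private lemma smallNorm_comp_le (μ : Measure G) (p θ : ℝ) (g : G → ℂ) (e : G → G)
    (h1 : MeasurePreserving e μ μ) (h2 : MeasurableEmbedding e) :
    smallNorm μ p θ (fun x => g (e x)) ≤ smallNorm μ p θ g := by
  unfold smallNorm
  refine le_iInf fun gk => ?_
  refine iInf_le_of_le ⟨fun k x => gk.1 k (e x), fun x => gk.2 (e x)⟩ ?_
  exact le_of_eq (tsum_congr fun k => pieceNorm_comp μ p θ (gk.1 k) e h1 h2)

set_option linter.unusedSectionVars false in
private lemma smallNorm_comp_eq (μ : Measure G) (p θ : ℝ) (g : G → ℂ) (e e' : G → G)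
    (hee' : ∀ x, e (e' x) = x)
    (h1 : MeasurePreserving e μ μ) (h2 : MeasurableEmbedding e)
    (h1' : MeasurePreserving e' μ μ) (h2' : MeasurableEmbedding e') :
    smallNorm μ p θ (fun x => g (e x)) = smallNorm μ p θ g := by
  refine le_antisymm (smallNorm_comp_le μ p θ g e h1 h2) ?_
  have := smallNorm_comp_le μ p θ (fun x => g (e x)) e' h1' h2'
  simpa [hee'] using this

private lemma conjExp_pos {r : ℝ} (hr : 1 < r) : 0 < conjExp r :=
  div_pos (by linarith) (by linarith)

set_option linter.unusedSectionVars false in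
private lemma pieceNorm_mul_le (μ : Measure G) (p θ : ℝ) (hp : 1 < p) (c : ℂ) (h : G → ℂ) :
    pieceNorm μ p θ (fun x => c * h x) ≤ (‖c‖₊ : ℝ≥0∞) * pieceNorm μ p θ h := by
  have hne : Nonempty {ε : ℝ // 0 < ε ∧ ε < p - 1} :=
    ⟨⟨(p - 1) / 2, by constructor <;> linarith⟩⟩
  unfold pieceNorm
  rw [ENNReal.mul_iInf (fun h => absurd h coe_ne_top)]
  refine le_iInf fun ε => iInf_le_of_le ε (le_of_eq ?_)
  have hr : 0 < conjExp (p - ε.1) := conjExp_pos (by have := ε.2.2; linarith)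
  set r := conjExp (p - ε.1) with hrdef
  have key : ∫⁻ x, (‖c * h x‖₊ : ℝ≥0∞) ^ r ∂μ
      = (‖c‖₊ : ℝ≥0∞) ^ r * ∫⁻ x, (‖h x‖₊ : ℝ≥0∞) ^ r ∂μ := by
    rw [← lintegral_const_mul' _ _ (ENNReal.rpow_ne_top_of_nonneg hr.le coe_ne_top)]
    refine lintegral_congr fun x => ?_
    rw [nnnorm_mul, coe_mul, ENNReal.mul_rpow_of_nonneg _ _ hr.le]
  rw [key, ENNReal.mul_rpow_of_nonneg _ _ (by positivity : (0:ℝ) ≤ 1 / r),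
    ← ENNReal.rpow_mul, mul_one_div_cancel hr.ne', ENNReal.rpow_one]
  ring

set_option linter.unusedSectionVars false in
private lemma smallNorm_mul_le (μ : Measure G) (p θ : ℝ) (hp : 1 < p) (c : ℂ) (g : G → ℂ) :
    smallNorm μ p θ (fun x => c * g x) ≤ (‖c‖₊ : ℝ≥0∞) * smallNorm μ p θ g := by
  have hne : Nonempty {gk : ℕ → G → ℂ // ∀ x, HasSum (fun k => gk k x) (g x)} :=
    ⟨⟨fun k x => if k = 0 then g x else 0, fun x => hasSum_ite_eq 0 (g x)⟩⟩
  unfold smallNorm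
  rw [ENNReal.mul_iInf (fun h => absurd h coe_ne_top)]
  refine le_iInf fun gk => ?_
  refine iInf_le_of_le ⟨fun k x => c * gk.1 k x, fun x => (gk.2 x).mul_left c⟩ ?_
  calc ∑' k, pieceNorm μ p θ (fun x => c * gk.1 k x)
      ≤ ∑' k, (‖c‖₊ : ℝ≥0∞) * pieceNorm μ p θ (gk.1 k) :=
        ENNReal.tsum_le_tsum fun k => pieceNorm_mul_le μ p θ hp c (gk.1 k)
    _ = (‖c‖₊ : ℝ≥0∞) * ∑' k, pieceNorm μ p θ (gk.1 k) := ENNReal.tsum_mul_left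

/-- weighted sums of dilated symbols,
`m_Ψ(s,t) = Σ_{u ∈ A*Ĝ} m(A*s, A*t) Ψ(u)` with `Ψ ∈ ℓ¹(Ĝ, |A*|^{-1/q} dμ)`. -/
theorem weighted_dilated_symbols
    (μ : Measure G) [μ.IsAddHaarMeasure] [IsFiniteMeasure μ]
    (χ : Γ → G → ℂ) (hχ : IsCharFamily χ)
    (p₁ p₂ p₃ θ : ℝ) (hp₁ : 1 < p₁) (hp₂ : 1 < p₂) (hp₃ : 1 < p₃) (hθ : 0 ≤ θ)
    (A : G ≃+ G) (hA : Continuous A) (hA' : Continuous A.symm)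
    (modA : ℝ) (hmodA : 0 < modA)
    (hAmod : ∀ U : Set G, MeasurableSet U → μ (⇑A '' U) = ENNReal.ofReal modA * μ U)
    (Astar : Γ ≃+ Γ) (hAdj : ∀ (x : G) (s : Γ), χ s (A x) = χ (Astar s) x)
    (q : ℝ) (hq : 1 / q = 1 / conjExp p₁ + 1 / conjExp p₂ - 1 / conjExp p₃)
    (m : Γ → Γ → ℂ) (hm_bd : ∃ Cb : ℝ, ∀ s t : Γ, ‖m s t‖ ≤ Cb)
    (hm : BMclass μ χ p₁ p₂ p₃ θ m)
    (Ψ : Γ → ℂ) (hΨ : Summable fun u : Γ => modA ^ (-(1 / q)) * ‖Ψ u‖) :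
    BMclass μ χ p₁ p₂ p₃ θ
        (fun s t => ∑' u : Set.range (⇑Astar), m (Astar s) (Astar t) * Ψ u.1) ∧
    BMnorm μ χ p₁ p₂ p₃ θ
        (fun s t => ∑' u : Set.range (⇑Astar), m (Astar s) (Astar t) * Ψ u.1) ≤
      ENNReal.ofReal (∑' u : Γ, modA ^ (-(1 / q)) * ‖Ψ u‖) *
        BMnorm μ χ p₁ p₂ p₃ θ m := by
  -- basic facts about the measure
  have hGne : Nonempty G := ⟨0⟩
  have hμ0 : μ Set.univ ≠ 0 := by
    simpa using (isOpen_univ.measure_ne_zero μ (Set.univ_nonempty))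
  have hμT : μ Set.univ ≠ ⊤ := measure_ne_top μ _
  have hmod1 : ENNReal.ofReal modA = 1 := by
    have h := hAmod Set.univ MeasurableSet.univ
    rw [Set.image_univ, A.surjective.range_eq] at h
    exact (ENNReal.mul_eq_right hμ0 hμT).mp h.symm
  have hmodA1 : modA = 1 := ENNReal.ofReal_eq_one.mp hmod1
  have hmeasA : Measurable (⇑A) := hA.measurable
  have hmeasA' : Measurable (⇑A.symm) := hA'.measurable
  have hmpA : MeasurePreserving (⇑A) μ μ := by
    refine ⟨hmeasA, ?_⟩
    ext U hU
    rw [Measure.map_apply hmeasA hU]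
    have h2 := hAmod (⇑A ⁻¹' U) (hU.preimage hmeasA)
    rw [Set.image_preimage_eq U A.surjective, hmod1, one_mul] at h2
    exact h2.symm
  have hmpA' : MeasurePreserving (⇑A.symm) μ μ := by
    refine ⟨hmeasA', ?_⟩
    ext U hU
    rw [Measure.map_apply hmeasA' hU]
    have h2 := hAmod U hU
    rw [hmod1, one_mul] at h2
    have him : ⇑A.symm ⁻¹' U = ⇑A '' U := by
      ext x
      constructor
      · intro hx
        exact ⟨A.symm x, hx, A.apply_symm_apply x⟩
      · rintro ⟨y, hy, rfl⟩
        simpa using hy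
    rw [him, h2]
  let eA : G ≃ₜ G := { toEquiv := A.toEquiv, continuous_toFun := hA, continuous_invFun := hA' }
  have hembA : MeasurableEmbedding (⇑A) := eA.measurableEmbedding
  have hembA' : MeasurableEmbedding (⇑A.symm) := eA.symm.measurableEmbedding
  have hAA' : ∀ x : G, A (A.symm x) = x := fun x => A.apply_symm_apply x
  have hA'A : ∀ x : G, A.symm (A x) = x := fun x => A.symm_apply_apply x
  -- character identities
  have hχA : ∀ (s : Γ) (z : G), χ s (A.symm z) = χ (Astar.symm s) z := by
    intro s z
    have h := hAdj (A.symm z) (Astar.symm s)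
    rw [A.apply_symm_apply, Astar.apply_symm_apply] at h
    exact h.symm
  -- Fourier transform under dilation
  have hfour : ∀ (f : G → ℂ) (s : Γ),
      fourierT μ χ (fun x => f (A x)) s = fourierT μ χ f (Astar.symm s) := by
    intro f s
    unfold fourierT
    have hpt : ∀ x : G, f (A x) * χ s (-x) = f (A x) * χ (Astar.symm s) (-(A x)) := by
      intro x
      rw [← map_neg A x, hAdj, Astar.apply_symm_apply]
    simp_rw [hpt]
    exact hmpA.integral_comp hembA (fun y => f y * χ (Astar.symm s) (-y))
  -- Bop under dilation of the symbol
  have hBop : ∀ (f g : G → ℂ) (x : G),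
      Bop μ χ (fun s t => m (Astar s) (Astar t)) f g x
        = Bop μ χ m (fun y => f (A y)) (fun y => g (A y)) (A.symm x) := by
    intro f g x
    unfold Bop
    have h1 : ∀ s t : Γ,
        fourierT μ χ (fun y => f (A y)) s * fourierT μ χ (fun y => g (A y)) t * m s t
            * χ (s + t) (A.symm x)
          = fourierT μ χ f (Astar.symm s) * fourierT μ χ g (Astar.symm t) * m s t
            * χ (Astar.symm (s + t)) x := by
      intro s t
      rw [hfour, hfour, hχA]
    calc ∑' s, ∑' t, fourierT μ χ f s * fourierT μ χ g t * m (Astar s) (Astar t) * χ (s + t) x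
        = ∑' s, ∑' t, (fun s' t' => fourierT μ χ f (Astar.symm s') * fourierT μ χ g (Astar.symm t')
            * m s' t' * χ (Astar.symm (s' + t')) x) (Astar s) (Astar t) := by
          refine tsum_congr fun s => tsum_congr fun t => ?_
          simp only [AddEquiv.symm_apply_apply]
          rw [← map_add Astar, AddEquiv.symm_apply_apply]
      _ = ∑' s, ∑' t, (fun s' t' => fourierT μ χ f (Astar.symm s') * fourierT μ χ g (Astar.symm t')
            * m s' t' * χ (Astar.symm (s' + t')) x) (Astar s) t := by
          refine tsum_congr fun s => ?_
          exact Astar.toEquiv.tsum_eq (fun t' => (fun s' t'' => fourierT μ χ f (Astar.symm s')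
            * fourierT μ χ g (Astar.symm t'') * m s' t'' * χ (Astar.symm (s' + t'')) x) (Astar s) t')
      _ = ∑' s, ∑' t, (fun s' t' => fourierT μ χ f (Astar.symm s') * fourierT μ χ g (Astar.symm t')
            * m s' t' * χ (Astar.symm (s' + t')) x) s t :=
          Astar.toEquiv.tsum_eq (fun s' => ∑' t, (fun s'' t' => fourierT μ χ f (Astar.symm s'')
            * fourierT μ χ g (Astar.symm t') * m s'' t' * χ (Astar.symm (s'' + t')) x) s' t)
      _ = ∑' s, ∑' t, fourierT μ χ (fun y => f (A y)) s * fourierT μ χ (fun y => g (A y)) t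
            * m s t * χ (s + t) (A.symm x) :=
          tsum_congr fun s => tsum_congr fun t => (h1 s t).symm
  -- Bop with a constant-multiplied symbol
  have hBopc : ∀ (m' : Γ → Γ → ℂ) (c : ℂ) (f g : G → ℂ),
      Bop μ χ (fun s t => m' s t * c) f g = fun x => c * Bop μ χ m' f g x := by
    intro m' c f g
    funext x
    unfold Bop
    rw [← tsum_mul_left]
    refine tsum_congr fun s => ?_
    rw [← tsum_mul_left]
    exact tsum_congr fun t => by ring
  -- summability of Ψ and the constant c
  have hΨ' : Summable (fun u : Γ => ‖Ψ u‖) := by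
    simpa [hmodA1, Real.one_rpow] using hΨ
  have hΨs : Summable Ψ := hΨ'.of_norm
  set c : ℂ := ∑' u : Γ, Ψ u with hc
  -- rewrite the symbol
  have hmψ : (fun s t => ∑' u : Set.range (⇑Astar), m (Astar s) (Astar t) * Ψ u.1)
      = fun s t => m (Astar s) (Astar t) * c := by
    funext s t
    rw [tsum_subtype (Set.range (⇑Astar)) (fun u => m (Astar s) (Astar t) * Ψ u),
      Astar.surjective.range_eq]
    simp only [Set.indicator_univ]
    rw [tsum_mul_left]
  rw [hmψ]
  -- key estimate
  have hsnf : ∀ (p : ℝ) (f : G → ℂ), smallNorm μ p θ (fun y => f (A y)) = smallNorm μ p θ f :=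
    fun p f => smallNorm_comp_eq μ p θ f (⇑A) (⇑A.symm) hAA' hmpA hembA hmpA' hembA'
  have key : ∀ f g : G → ℂ,
      smallNorm μ p₃ θ (Bop μ χ (fun s t => m (Astar s) (Astar t) * c) f g)
        ≤ (‖c‖₊ : ℝ≥0∞) * smallNorm μ p₃ θ
            (Bop μ χ m (fun y => f (A y)) (fun y => g (A y))) := by
    intro f g
    rw [hBopc]
    refine le_trans (smallNorm_mul_le μ p₃ θ hp₃ c _) ?_
    refine mul_le_mul_right (le_of_eq ?_) _
    have e2 : Bop μ χ (fun s t => m (Astar s) (Astar t)) f g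
        = fun x => (Bop μ χ m (fun y => f (A y)) (fun y => g (A y))) (A.symm x) :=
      funext (hBop f g)
    rw [e2]
    exact smallNorm_comp_eq μ p₃ θ _ (⇑A.symm) (⇑A) hA'A hmpA' hembA' hmpA hembA
  -- conclude
  obtain ⟨C, hC, hbd⟩ := hm
  have hcnorm : ‖c‖ ≤ ∑' u : Γ, ‖Ψ u‖ := norm_tsum_le_tsum_norm hΨ'
  constructor
  · refine ⟨(‖c‖ + 1) * C, by positivity, fun f g hf hg => ?_⟩
    calc smallNorm μ p₃ θ (Bop μ χ (fun s t => m (Astar s) (Astar t) * c) f g)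
        ≤ (‖c‖₊ : ℝ≥0∞) * smallNorm μ p₃ θ
            (Bop μ χ m (fun y => f (A y)) (fun y => g (A y))) := key f g
      _ ≤ (‖c‖₊ : ℝ≥0∞) * (ENNReal.ofReal C
            * (smallNorm μ p₁ θ (fun y => f (A y)) * smallNorm μ p₂ θ (fun y => g (A y)))) :=
          mul_le_mul_right (hbd _ _ (hf.comp hA) (hg.comp hA)) _
      _ = (‖c‖₊ : ℝ≥0∞) * (ENNReal.ofReal C * (smallNorm μ p₁ θ f * smallNorm μ p₂ θ g)) := by
          rw [hsnf p₁ f, hsnf p₂ g]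
      _ ≤ ENNReal.ofReal ((‖c‖ + 1) * C) * (smallNorm μ p₁ θ f * smallNorm μ p₂ θ g) := by
          rw [← mul_assoc]
          refine mul_le_mul_left ?_ _
          rw [ENNReal.ofReal_mul (by positivity), ← enorm_eq_nnnorm, ← ofReal_norm]
          exact mul_le_mul_left (ENNReal.ofReal_le_ofReal (by linarith)) _
  · have hcoef : ENNReal.ofReal (∑' u : Γ, modA ^ (-(1 / q)) * ‖Ψ u‖)
        = ENNReal.ofReal (∑' u : Γ, ‖Ψ u‖) := by
      simp [hmodA1, Real.one_rpow]
    rw [hcoef]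
    unfold BMnorm
    refine iSup_le fun f => iSup_le fun g => iSup_le fun hf => iSup_le fun hg =>
      iSup_le fun h1 => iSup_le fun h2 => ?_
    have hsf : smallNorm μ p₁ θ (fun y => f (A y)) ≤ 1 := by rw [hsnf p₁ f]; exact h1
    have hsg : smallNorm μ p₂ θ (fun y => g (A y)) ≤ 1 := by rw [hsnf p₂ g]; exact h2
    have hsup : smallNorm μ p₃ θ (Bop μ χ m (fun y => f (A y)) (fun y => g (A y)))
        ≤ ⨆ (f : G → ℂ) (g : G → ℂ) (_ : Continuous f) (_ : Continuous g)
            (_ : smallNorm μ p₁ θ f ≤ 1) (_ : smallNorm μ p₂ θ g ≤ 1),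
            smallNorm μ p₃ θ (Bop μ χ m f g) :=
      le_iSup_of_le (fun y => f (A y)) (le_iSup_of_le (fun y => g (A y))
        (le_iSup_of_le (hf.comp hA) (le_iSup_of_le (hg.comp hA)
          (le_iSup_of_le hsf (le_iSup_of_le hsg le_rfl)))))
    have hcle : (‖c‖₊ : ℝ≥0∞) ≤ ENNReal.ofReal (∑' u : Γ, ‖Ψ u‖) := by
      rw [← enorm_eq_nnnorm, ← ofReal_norm]
      exact ENNReal.ofReal_le_ofReal hcnorm
    exact le_trans (key f g) (mul_le_mul' hcle hsup)

end
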